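/- Discrete Loomis-Whitney: Let B be a finite subset of ℤⁿ (n ≥ 2), and for j ∈ {1,…,n} let B_j ⊆ ℤ^{n-1} be the projection of B obtained by deleting the j-th coordinate. Then |B|^{n-1} ≤ Π_{j=1}^{n} |B_j|. -/

import Mathlib

open Finset MeasureTheory
open scoped ENNReal

theorem LW_aux : ∀ (n : ℕ) (ι : Type) [Fintype ι] [DecidableEq ι],
    Fintype.card ι = n → ∀ B : Finset (ι → ℤ), B.Nonempty →
    B.card ^ (n - 1) ≤
      ∏ j : ι, (B.image (fun x => fun i : {i : ι // i ≠ j} => x i)).card := by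
  intro n
  induction n with
  | zero =>
    intro ι _ _ hcard B hB
    have : IsEmpty ι := Fintype.card_eq_zero_iff.mp hcard
    simp
  | succ n ih =>
    intro ι _ _ hcard B hB
    rcases Nat.eq_zero_or_pos n with hn0 | hn1
    · subst hn0
      simpa using Finset.one_le_prod' fun j _ => Finset.card_pos.mpr (hB.image _)
    · simp only [Nat.add_sub_cancel]
      have hne : Nonempty ι := Fintype.card_pos_iff.mp (by omega)
      obtain ⟨j₀⟩ := hne
      have hκ : Fintype.card {i : ι // i ≠ j₀} = n := by
        have h1 := Fintype.card_subtype_compl (fun i : ι => i = j₀)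
        simp only [Fintype.card_subtype_eq] at h1
        simp only [ne_eq]
        omega
      have hκne : Nonempty {i : ι // i ≠ j₀} := Fintype.card_pos_iff.mp (by omega)
      set T : Finset ℤ := B.image (fun x => x j₀) with hT
      set S : ℤ → Finset ({i : ι // i ≠ j₀} → ℤ) := fun t =>
        (B.filter (fun x => x j₀ = t)).image (fun x => fun i : {i : ι // i ≠ j₀} => x i) with hS
      -- F1
      have F1 : ∀ t, (S t).card = (B.filter (fun x => x j₀ = t)).card := by
        intro t
        apply Finset.card_image_of_injOn
        intro x hx y hy hxy
        simp only [Finset.mem_coe, Finset.mem_filter] at hx hy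
        funext i
        by_cases hi : i = j₀
        · rw [hi, hx.2, hy.2]
        · exact congrFun hxy ⟨i, hi⟩
      -- F2
      have F2 : B.card = ∑ t ∈ T, (S t).card := by
        rw [Finset.card_eq_sum_card_fiberwise (f := fun x => x j₀) (t := T)
          (fun x hx => Finset.mem_image_of_mem _ hx)]
        exact Finset.sum_congr rfl fun t _ => (F1 t).symm
      -- F3
      have F3 : ∀ t, S t ⊆ B.image (fun x => fun i : {i : ι // i ≠ j₀} => x i) :=
        fun t => Finset.image_subset_image (Finset.filter_subset _ _)
      -- nonempty slices
      have hSne : ∀ t ∈ T, (S t).Nonempty := by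
        intro t ht
        obtain ⟨x, hx, hxt⟩ := Finset.mem_image.mp ht
        exact ⟨_, Finset.mem_image_of_mem _ (Finset.mem_filter.mpr ⟨hx, hxt⟩)⟩
      -- zero off T
      have hSzero : ∀ t, t ∉ T → S t = ∅ := by
        intro t ht
        rw [hS]
        simp only [Finset.image_eq_empty, Finset.filter_eq_empty_iff]
        intro x hx hxt
        exact ht (Finset.mem_image.mpr ⟨x, hx, hxt⟩)
      -- F4 : summed slice projections inject into the full projection
      have F4 : ∀ j : {i : ι // i ≠ j₀},
          ∑ t ∈ T, ((S t).image
            (fun y => fun i : {i : {i : ι // i ≠ j₀} // i ≠ j} => y i)).card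
          ≤ (B.image (fun x => fun i : {i : ι // i ≠ j.1} => x i)).card := by
        intro j
        set Φ : ℤ → ({i : {i : ι // i ≠ j₀} // i ≠ j} → ℤ) → ({i : ι // i ≠ j.1} → ℤ) :=
          fun t z i =>
            if h : i.1 = j₀ then t
            else z ⟨⟨i.1, h⟩, fun hc => i.2 (congrArg Subtype.val hc)⟩ with hΦ
        have hΦinj : ∀ t, Function.Injective (Φ t) := by
          intro t z z' h
          funext i
          have h2 := congrFun h ⟨i.1.1, fun hc => i.2 (Subtype.ext hc)⟩
          simpa only [hΦ, dif_neg i.1.2] using h2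
        have himg : ∀ t ∈ T, (((S t).image
            (fun y => fun i : {i : {i : ι // i ≠ j₀} // i ≠ j} => y i)).image (Φ t))
            ⊆ B.image (fun x => fun i : {i : ι // i ≠ j.1} => x i) := by
          intro t ht w hw
          simp only [Finset.mem_image] at hw
          obtain ⟨z, hz, hzw⟩ := hw
          simp only [hS, Finset.mem_image] at hz
          obtain ⟨y, hy, hyz⟩ := hz
          obtain ⟨x, hx, hxy⟩ := hy
          simp only [Finset.mem_filter] at hx
          refine Finset.mem_image.mpr ⟨x, hx.1, ?_⟩
          rw [← hzw, ← hyz, ← hxy]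
          funext i
          by_cases hi : i.1 = j₀
          · simp only [hΦ, dif_pos hi, hx.2, hi]
          · simp only [hΦ, dif_neg hi]
        have hdisj : ∀ t₁ ∈ T, ∀ t₂ ∈ T, t₁ ≠ t₂ →
            Disjoint (((S t₁).image
              (fun y => fun i : {i : {i : ι // i ≠ j₀} // i ≠ j} => y i)).image (Φ t₁))
              (((S t₂).image
              (fun y => fun i : {i : {i : ι // i ≠ j₀} // i ≠ j} => y i)).image (Φ t₂)) := by
          intro t₁ _ t₂ _ hne12
          rw [Finset.disjoint_left]
          intro w hw1 hw2
          obtain ⟨z₁, _, hz₁⟩ := Finset.mem_image.mp hw1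
          obtain ⟨z₂, _, hz₂⟩ := Finset.mem_image.mp hw2
          apply hne12
          have e1 := congrFun hz₁ ⟨j₀, fun hc => j.2 hc.symm⟩
          have e2 := congrFun hz₂ ⟨j₀, fun hc => j.2 hc.symm⟩
          simp only [hΦ, dif_pos rfl] at e1 e2
          exact e1.trans e2.symm
        calc ∑ t ∈ T, ((S t).image
              (fun y => fun i : {i : {i : ι // i ≠ j₀} // i ≠ j} => y i)).card
            = ∑ t ∈ T, (((S t).image
              (fun y => fun i : {i : {i : ι // i ≠ j₀} // i ≠ j} => y i)).image (Φ t)).card := by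
              refine Finset.sum_congr rfl fun t _ => ?_
              rw [Finset.card_image_of_injective _ (hΦinj t)]
          _ = (T.biUnion (fun t => ((S t).image
              (fun y => fun i : {i : {i : ι // i ≠ j₀} // i ≠ j} => y i)).image (Φ t))).card := by
              rw [Finset.card_biUnion hdisj]
          _ ≤ (B.image (fun x => fun i : {i : ι // i ≠ j.1} => x i)).card := by
              apply Finset.card_le_card
              exact Finset.biUnion_subset.mpr himg
      -- abbreviations in ℝ≥0∞
      set a : ℤ → ℝ≥0∞ := fun t => ((S t).card : ℝ≥0∞) with ha
      set c : {i : ι // i ≠ j₀} → ℤ → ℝ≥0∞ := fun j t =>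
        (((S t).image (fun y => fun i : {i : {i : ι // i ≠ j₀} // i ≠ j} => y i)).card : ℝ≥0∞) with hc
      set b : ι → ℝ≥0∞ := fun j =>
        ((B.image (fun x => fun i : {i : ι // i ≠ j} => x i)).card : ℝ≥0∞) with hb
      set r : ℝ := (n : ℝ)⁻¹ with hrdef
      have hnR : (0:ℝ) < n := by exact_mod_cast hn1
      have hr0 : 0 < r := by positivity
      -- Hölder via counting measure
      have hcz : ∀ j' t, t ∉ T → c j' t = 0 := by
        intro j' t ht
        simp [hc, hSzero t ht]
      have hHolder : ∑ t ∈ T, ∏ j' : {i : ι // i ≠ j₀}, (c j' t) ^ r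
          ≤ ∏ j' : {i : ι // i ≠ j₀}, (∑ t ∈ T, c j' t) ^ r := by
        have h1 : ∀ j' : {i : ι // i ≠ j₀},
            ∫⁻ t, c j' t ∂(Measure.count) = ∑ t ∈ T, c j' t := by
          intro j'
          rw [MeasureTheory.lintegral_count]
          exact tsum_eq_sum (fun t ht => hcz j' t ht)
        have h2 : ∫⁻ t, ∏ j' : {i : ι // i ≠ j₀}, c j' t ^ r ∂(Measure.count)
            = ∑ t ∈ T, ∏ j' : {i : ι // i ≠ j₀}, c j' t ^ r := by
          rw [MeasureTheory.lintegral_count]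
          refine tsum_eq_sum fun t ht => ?_
          obtain ⟨j₁⟩ := hκne
          refine Finset.prod_eq_zero (Finset.mem_univ j₁) ?_
          rw [hcz j₁ t ht]
          exact ENNReal.zero_rpow_of_pos hr0
        have hsum1 : ∑ _j' : {i : ι // i ≠ j₀}, r = 1 := by
          rw [Finset.sum_const, Finset.card_univ, hκ, nsmul_eq_mul, hrdef]
          exact mul_inv_cancel₀ (ne_of_gt hnR)
        have := ENNReal.lintegral_prod_norm_pow_le (μ := Measure.count)
          (Finset.univ : Finset {i : ι // i ≠ j₀}) (f := fun j' t => c j' t)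
          (fun j' _ => (measurable_of_countable _).aemeasurable)
          (p := fun _ => r) hsum1 (fun _ _ => hr0.le)
        rw [h2] at this
        refine this.trans ?_
        refine le_of_eq (Finset.prod_congr rfl fun j' _ => ?_)
        rw [h1 j']
      -- per-slice bound
      have hterm : ∀ t ∈ T, a t ≤ (b j₀) ^ r * ∏ j' : {i : ι // i ≠ j₀}, (c j' t) ^ r := by
        intro t ht
        have ha0 : a t ≠ 0 := by
          simpa [ha] using Finset.card_pos.mpr (hSne t ht) |>.ne'
        have hatop : a t ≠ ⊤ := by simp [ha]
        have hexp : r + ((n:ℝ) - 1) * r = 1 := by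
          rw [hrdef]; linear_combination inv_mul_cancel₀ (ne_of_gt hnR)
        calc a t = a t ^ (1:ℝ) := (ENNReal.rpow_one _).symm
          _ = a t ^ r * a t ^ (((n:ℝ) - 1) * r) := by
              rw [← ENNReal.rpow_add _ _ ha0 hatop, hexp]
          _ ≤ (b j₀) ^ r * ∏ j' : {i : ι // i ≠ j₀}, (c j' t) ^ r := by
              refine mul_le_mul' ?_ ?_
              · refine ENNReal.rpow_le_rpow ?_ hr0.le
                exact Nat.cast_le.mpr (Finset.card_le_card (F3 t))
              · have hstep : a t ^ (((n:ℝ) - 1) * r)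
                    = (a t ^ (n - 1 : ℕ)) ^ r := by
                  rw [ENNReal.rpow_mul]
                  congr 1
                  rw [← ENNReal.rpow_natCast]
                  congr 1
                  rw [Nat.cast_sub hn1, Nat.cast_one]
                rw [hstep]
                have hIH : (a t) ^ (n - 1 : ℕ) ≤ ∏ j' : {i : ι // i ≠ j₀}, c j' t := by
                  rw [ha, hc]
                  push_cast
                  exact_mod_cast ih _ hκ (S t) (hSne t ht)
                calc (a t ^ (n - 1 : ℕ)) ^ r
                    ≤ (∏ j' : {i : ι // i ≠ j₀}, c j' t) ^ r := ENNReal.rpow_le_rpow hIH hr0.le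
                  _ = ∏ j' : {i : ι // i ≠ j₀}, (c j' t) ^ r :=
                      (ENNReal.prod_rpow_of_nonneg hr0.le).symm
      -- combine
      have key : (B.card : ℝ≥0∞) ≤ (b j₀) ^ r * ∏ j' : {i : ι // i ≠ j₀}, (b j'.1) ^ r := by
        calc (B.card : ℝ≥0∞) = ∑ t ∈ T, a t := by simp only [ha]; exact_mod_cast F2
          _ ≤ ∑ t ∈ T, ((b j₀) ^ r * ∏ j' : {i : ι // i ≠ j₀}, (c j' t) ^ r) :=
              Finset.sum_le_sum hterm
          _ = (b j₀) ^ r * ∑ t ∈ T, ∏ j' : {i : ι // i ≠ j₀}, (c j' t) ^ r := by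
              rw [Finset.mul_sum]
          _ ≤ (b j₀) ^ r * ∏ j' : {i : ι // i ≠ j₀}, (∑ t ∈ T, c j' t) ^ r :=
              mul_le_mul_right hHolder _
          _ ≤ (b j₀) ^ r * ∏ j' : {i : ι // i ≠ j₀}, (b j'.1) ^ r := by
              refine mul_le_mul_right (Finset.prod_le_prod' fun j' _ => ?_) _
              refine ENNReal.rpow_le_rpow ?_ hr0.le
              have := F4 j'
              rw [hc, hb]
              push_cast
              exact_mod_cast this
      -- raise to the n-th power
      have hfin : (B.card : ℝ≥0∞) ^ (n : ℕ) ≤ ∏ j : ι, b j := by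
        have h := ENNReal.rpow_le_rpow key (Nat.cast_nonneg n : (0:ℝ) ≤ n)
        rw [ENNReal.rpow_natCast] at h
        refine h.trans (le_of_eq ?_)
        rw [ENNReal.mul_rpow_of_nonneg _ _ (Nat.cast_nonneg n)]
        rw [← ENNReal.rpow_mul, ENNReal.prod_rpow_of_nonneg hr0.le, ← ENNReal.rpow_mul]
        rw [hrdef, inv_mul_cancel₀ (ne_of_gt hnR), ENNReal.rpow_one, ENNReal.rpow_one]
        rw [← Finset.mul_prod_erase Finset.univ b (Finset.mem_univ j₀)]
        congr 1
        exact (Finset.prod_subtype (Finset.univ.erase j₀)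
          (fun x => by simp [Finset.mem_erase]) b).symm
      rw [hb] at hfin
      push_cast at hfin
      exact_mod_cast hfin

/-- Discrete Loomis–Whitney inequality: for a finite `B ⊆ ℤⁿ` (`n ≥ 2`),
`|B|^{n-1} ≤ Π_j |B_j|`, where `B_j` is the projection deleting coordinate `j`. -/
theorem discrete_loomis_whitney (n : ℕ) (hn : 2 ≤ n) (B : Finset (Fin n → ℤ)) :
    B.card ^ (n - 1) ≤
      ∏ j : Fin n, (B.image (fun x => fun i : {i : Fin n // i ≠ j} => x i)).card := by
  rcases B.eq_empty_or_nonempty with rfl | hB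
  · simp only [Finset.image_empty, Finset.card_empty]
    rw [Nat.zero_pow (by omega)]
    exact Nat.zero_le _
  · exact LW_aux n (Fin n) (Fintype.card_fin n) B hB
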